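/- Let a : ℕ → ℚ be the cubical Gromov coefficients: a(0)=1, a(1)=-1, a(2)=A with A ≤ -1, and 2·a(n) = -(∑_{k=0}^{n-2} a(k)·C(n-1,k)·2^{n-1-k} + ∑_{k=0}^{n-1} a(k)·C(n,k)·2^{n-k}) for n ≥ 3. Define c(j,d) = ∑_{k=j}^{d} 2^{-k}·C(d-j,d-k)·a(k). Then for every m ≥ 1: c(j,4m) ≥ 0 for all 0 ≤ j ≤ 4m, and c(j,4m+2) ≤ 0 for all 0 ≤ j ≤ 4m+2. -/

import Mathlib

section
variable (a : ℕ → ℚ) (c : ℕ → ℕ → ℚ)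

theorem myPascal (hc : ∀ j d, c j d = ∑ k ∈ Finset.Icc j d,
      ((d - j).choose (d - k) : ℚ) * a k / 2 ^ k)
    (j d : ℕ) (hj : j ≤ d) : c j (d+1) = c j d + c (j+1) (d+1) := by
  rw [hc, hc, hc]
  rw [← Finset.Ico_add_one_right_eq_Icc, ← Finset.Ico_add_one_right_eq_Icc, ← Finset.Ico_add_one_right_eq_Icc]
  rw [Finset.sum_eq_sum_Ico_succ_bot (by omega : j < d+1+1)]
  rw [Finset.sum_eq_sum_Ico_succ_bot (by omega : j < d+1)]
  rw [Finset.sum_Ico_succ_top (by omega : j+1 ≤ d+1)]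
  rw [Finset.sum_Ico_succ_top (by omega : j+1 ≤ d+1)]
  have e1 : d + 1 - j = (d - j) + 1 := by omega
  have : ∀ k ∈ Finset.Ico (j+1) (d+1),
      ((d+1-j).choose (d+1-k) : ℚ) * a k / 2 ^ k =
      ((d-j).choose (d-k) : ℚ) * a k / 2 ^ k + ((d-j).choose (d+1-k) : ℚ) * a k / 2 ^ k := by
    intro k hk
    simp only [Finset.mem_Ico] at hk
    have e2 : d + 1 - k = (d - k) + 1 := by omega
    rw [e1, e2, Nat.choose_succ_succ]
    push_cast
    ring
  rw [Finset.sum_congr rfl this, Finset.sum_add_distrib]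
  simp [e1, Nat.sub_self]
  ring

theorem myDiag (hc : ∀ j d, c j d = ∑ k ∈ Finset.Icc j d,
      ((d - j).choose (d - k) : ℚ) * a k / 2 ^ k) (d : ℕ) :
    c d d = a d / 2 ^ d := by
  rw [hc]; simp

theorem myTel (pas : ∀ j d, j ≤ d → c j (d+1) = c j d + c (j+1) (d+1)) :
    ∀ n j0 i d, j0 + n = i → i ≤ d + 1 →
      c j0 (d+1) = (∑ j ∈ Finset.Ico j0 i, c j d) + c i (d+1) := by
  intro n
  induction n with
  | zero => intro j0 i d h hi; subst h; simp
  | succ n ih =>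
      intro j0 i d h hi
      have h1 : j0 ≤ d := by omega
      rw [pas j0 d h1, Finset.sum_eq_sum_Ico_succ_bot (by omega : j0 < i)]
      have := ih (j0+1) i d (by omega) hi
      rw [this]; ring

theorem myB (hc : ∀ j d, c j d = ∑ k ∈ Finset.Icc j d,
      ((d - j).choose (d - k) : ℚ) * a k / 2 ^ k) (m : ℕ) :
    ∑ k ∈ Finset.range (m+1), a k * (m.choose k : ℚ) * 2 ^ (m - k) = 2 ^ m * c 0 m := by
  rw [hc, ← Finset.Ico_add_one_right_eq_Icc, ← Finset.range_eq_Ico, Finset.mul_sum]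
  refine Finset.sum_congr rfl ?_
  intro k hk
  simp only [Finset.mem_range] at hk
  have hk' : k ≤ m := by omega
  rw [Nat.sub_zero, Nat.choose_symm hk']
  have h2 : (2:ℚ)^m = 2^(m-k) * 2^k := by rw [← pow_add]; congr 1; omega
  have : (2:ℚ)^k ≠ 0 := by positivity
  field_simp [h2]
  rw [h2]; ring

theorem myRec (hc : ∀ j d, c j d = ∑ k ∈ Finset.Icc j d,
      ((d - j).choose (d - k) : ℚ) * a k / 2 ^ k)
    (hrec : ∀ n, 3 ≤ n →
      2 * a n = -((∑ k ∈ Finset.range (n - 1), a k * ((n - 1).choose k : ℚ) * 2 ^ (n - 1 - k)) +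
        ∑ k ∈ Finset.range n, a k * (n.choose k : ℚ) * 2 ^ (n - k)))
    (n : ℕ) (hn : 3 ≤ n) :
    a n = a (n-1) - 2 ^ (n-1) * c 0 (n-1) - 2 ^ n * c 0 n := by
  have h := hrec n hn
  obtain ⟨m, rfl⟩ : ∃ m, n = m + 1 := ⟨n - 1, by omega⟩
  simp only [Nat.add_sub_cancel] at h ⊢
  have hb1 := myB a c hc m
  have hb2 := myB a c hc (m+1)
  have e1 : ∑ k ∈ Finset.range m, a k * (m.choose k : ℚ) * 2 ^ (m - k)
      = 2 ^ m * c 0 m - a m := by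
    rw [Finset.sum_range_succ] at hb1
    simp only [Nat.choose_self, Nat.sub_self, pow_zero, Nat.cast_one, mul_one] at hb1
    linarith
  have e2 : ∑ k ∈ Finset.range (m+1), a k * ((m+1).choose k : ℚ) * 2 ^ (m+1-k)
      = 2 ^ (m+1) * c 0 (m+1) - a (m+1) := by
    rw [Finset.sum_range_succ] at hb2
    simp only [Nat.choose_self, Nat.sub_self, pow_zero, Nat.cast_one, mul_one] at hb2
    linarith
  rw [e1, e2] at h
  linarith

theorem mySymm (hc : ∀ j d, c j d = ∑ k ∈ Finset.Icc j d,
      ((d - j).choose (d - k) : ℚ) * a k / 2 ^ k)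
    (h0 : a 0 = 1) (h1 : a 1 = -1)
    (hrec : ∀ n, 3 ≤ n →
      2 * a n = -((∑ k ∈ Finset.range (n - 1), a k * ((n - 1).choose k : ℚ) * 2 ^ (n - 1 - k)) +
        ∑ k ∈ Finset.range n, a k * (n.choose k : ℚ) * 2 ^ (n - k))) :
    ∀ d j, j ≤ d → c j d = (-1)^d * c (d-j) d := by
  have pas := myPascal a c hc
  have tel := myTel c pas
  intro d
  induction d using Nat.strong_induction_on with
  | _ d IH =>
  have key0 : c 0 d = (-1)^d * c d d := by
    rcases Nat.lt_or_ge d 2 with hd2 | hd2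
    · interval_cases d
      · simp
      · have i01 : Finset.Icc 0 1 = {0, 1} := rfl
        rw [hc, hc]
        rw [i01]
        have i11 : Finset.Icc 1 1 = {1} := rfl
        rw [i11]
        rw [Finset.sum_pair (by norm_num), Finset.sum_singleton]
        simp [h0, h1]
        norm_num
    · rcases Nat.even_or_odd d with he | ho
      · -- even case: telescoping and antisymmetry of row d-1
        obtain ⟨e, rfl⟩ : ∃ e, d = e + 1 := ⟨d - 1, by omega⟩
        have hoe : Odd e := by
          rcases he with ⟨t, ht⟩; exact ⟨t - 1, by omega⟩
        have ht := tel (e+1) 0 (e+1) e (by omega) (le_refl _)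
        have hrefl := Finset.sum_range_reflect (fun j => c j e) (e+1)
        simp only [Nat.add_sub_cancel] at hrefl
        have h2 : ∑ j ∈ Finset.range (e+1), c j e
            = - ∑ j ∈ Finset.range (e+1), c (e-j) e := by
          rw [← Finset.sum_neg_distrib]
          refine Finset.sum_congr rfl ?_
          intro j hj
          simp only [Finset.mem_range] at hj
          have := IH e (by omega) j (by omega)
          rw [this, Odd.neg_one_pow hoe]; ring
        rw [hrefl] at h2
        have hsum : ∑ j ∈ Finset.Ico 0 (e+1), c j e = 0 := by
          rw [← Finset.range_eq_Ico]; linarith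
        rw [ht, hsum, Even.neg_one_pow he]; ring
      · -- odd case, d ≥ 3
        have hd3 : 3 ≤ d := by
          rcases ho with ⟨t, ht⟩; omega
        have hrec' := myRec a c hc hrec d hd3
        obtain ⟨e, rfl⟩ : ∃ e, d = e + 1 := ⟨d - 1, by omega⟩
        simp only [Nat.add_sub_cancel] at hrec'
        have hee : Even e := by
          rcases ho with ⟨t, ht⟩; exact ⟨t, by omega⟩
        have hm : c 0 e = c e e := by
          have := IH e (by omega) 0 (Nat.zero_le _)
          rw [this, Even.neg_one_pow hee]; simp
        have hde := myDiag a c hc e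
        have hdd := myDiag a c hc (e+1)
        have hne : (2:ℚ)^e ≠ 0 := by positivity
        have hne1 : (2:ℚ)^(e+1) ≠ 0 := by positivity
        have h2ec : 2^e * c 0 e = a e := by
          rw [hm, hde]; field_simp
        rw [Odd.neg_one_pow ho, hdd]
        have : (2:ℚ)^(e+1) * c 0 (e+1) = - a (e+1) := by
          rw [hrec'] at *; linarith [h2ec]
        field_simp at this ⊢
        linarith
  -- now the constancy argument
  intro j hj
  induction j with
  | zero => simpa using key0
  | succ j ihj =>
      have hj' : j ≤ d := by omega
      have ihj' := ihj hj'
      obtain ⟨e, rfl⟩ : ∃ e, d = e + 1 := ⟨d - 1, by omega⟩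
      have hje : j ≤ e := by omega
      have p1 := pas j e hje
      have p2 := pas (e - j) e (by omega)
      have hsub1 : e + 1 - j = (e - j) + 1 := by omega
      have hsub2 : e + 1 - (j + 1) = e - j := by omega
      rw [hsub1] at ihj'
      rw [hsub2]
      have hrow := IH e (by omega) j hje
      have hp : ((-1:ℚ))^(e+1) = -(-1)^e := by rw [pow_succ]; ring
      rw [hp] at ihj' ⊢
      rw [hrow] at p1
      -- unknowns: c j (e+1), c (j+1) (e+1), c (e-j) (e+1), c (e-j+1) (e+1), c (e-j) e, t = (-1)^e
      rcases Nat.even_or_odd e with he | ho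
      · rw [Even.neg_one_pow he] at *
        linarith
      · rw [Odd.neg_one_pow ho] at *
        linarith

theorem myAeq (hc : ∀ j d, c j d = ∑ k ∈ Finset.Icc j d,
      ((d - j).choose (d - k) : ℚ) * a k / 2 ^ k)
    (h0 : a 0 = 1) (h1 : a 1 = -1)
    (hrec : ∀ n, 3 ≤ n →
      2 * a n = -((∑ k ∈ Finset.range (n - 1), a k * ((n - 1).choose k : ℚ) * 2 ^ (n - 1 - k)) +
        ∑ k ∈ Finset.range n, a k * (n.choose k : ℚ) * 2 ^ (n - k)))
    (n : ℕ) (hn : 4 ≤ n) (hev : Even n) : a n = a (n-1) := by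
  have hrec' := myRec a c hc hrec n (by omega)
  obtain ⟨e, rfl⟩ : ∃ e, n = e + 1 := ⟨n - 1, by omega⟩
  simp only [Nat.add_sub_cancel] at hrec' ⊢
  have hoe : Odd e := by rcases hev with ⟨t, ht⟩; exact ⟨t - 1, by omega⟩
  have hs1 : c 0 e = - c e e := by
    have := mySymm a c hc h0 h1 hrec e 0 (Nat.zero_le _)
    rw [this, Odd.neg_one_pow hoe]; simp
  have hs2 : c 0 (e+1) = c (e+1) (e+1) := by
    have := mySymm a c hc h0 h1 hrec (e+1) 0 (Nat.zero_le _)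
    rw [this, Even.neg_one_pow hev]; simp
  have hde := myDiag a c hc e
  have hdd := myDiag a c hc (e+1)
  have hne : (2:ℚ)^e ≠ 0 := by positivity
  have hne1 : (2:ℚ)^(e+1) ≠ 0 := by positivity
  have e1 : 2^e * c 0 e = - a e := by rw [hs1, hde]; field_simp; try ring
  have e2 : 2^(e+1) * c 0 (e+1) = a (e+1) := by rw [hs2, hdd]; field_simp; try ring
  rw [e1, e2] at hrec'
  linarith

theorem myHalf (hc : ∀ j d, c j d = ∑ k ∈ Finset.Icc j d,
      ((d - j).choose (d - k) : ℚ) * a k / 2 ^ k)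
    (h0 : a 0 = 1) (h1 : a 1 = -1)
    (hrec : ∀ n, 3 ≤ n →
      2 * a n = -((∑ k ∈ Finset.range (n - 1), a k * ((n - 1).choose k : ℚ) * 2 ^ (n - 1 - k)) +
        ∑ k ∈ Finset.range n, a k * (n.choose k : ℚ) * 2 ^ (n - k)))
    (s : ℚ) (h : ℕ) (hrow : ∀ j, j ≤ 2*h → 0 ≤ s * c j (2*h))
    (i : ℕ) (hi1 : h + 1 ≤ i) (hi2 : i ≤ 2*h + 1) :
    s * c i (2*h+1) ≤ 0 := by
  have pas := myPascal a c hc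
  have tel := myTel c pas
  have ht := tel (i - (2*h+1-i)) (2*h+1-i) i (2*h) (by omega) (by omega)
  have anti : c (2*h+1-i) (2*h+1) = - c i (2*h+1) := by
    have := mySymm a c hc h0 h1 hrec (2*h+1) (2*h+1-i) (by omega)
    rw [this, Odd.neg_one_pow ⟨h, by omega⟩]
    have : 2*h+1 - (2*h+1-i) = i := by omega
    rw [this]; ring
  rw [anti] at ht
  have hX : c i (2*h+1) = - (∑ j ∈ Finset.Ico (2*h+1-i) i, c j (2*h)) / 2 := by
    linarith
  have hs : 0 ≤ s * ∑ j ∈ Finset.Ico (2*h+1-i) i, c j (2*h) := by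
    rw [Finset.mul_sum]
    apply Finset.sum_nonneg
    intro j hj
    simp only [Finset.mem_Ico] at hj
    exact hrow j (by omega)
  rw [hX]
  have : s * (- (∑ j ∈ Finset.Ico (2*h+1-i) i, c j (2*h)) / 2)
      = - (s * ∑ j ∈ Finset.Ico (2*h+1-i) i, c j (2*h)) / 2 := by ring
  rw [this]
  linarith

theorem myStep (hc : ∀ j d, c j d = ∑ k ∈ Finset.Icc j d,
      ((d - j).choose (d - k) : ℚ) * a k / 2 ^ k)
    (h0 : a 0 = 1) (h1 : a 1 = -1)
    (hrec : ∀ n, 3 ≤ n →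
      2 * a n = -((∑ k ∈ Finset.range (n - 1), a k * ((n - 1).choose k : ℚ) * 2 ^ (n - 1 - k)) +
        ∑ k ∈ Finset.range n, a k * (n.choose k : ℚ) * 2 ^ (n - k)))
    (s : ℚ) (h : ℕ) (hh : 1 ≤ h) (hrow : ∀ j, j ≤ 2*h → 0 ≤ s * c j (2*h)) :
    ∀ j, j ≤ 2*h + 2 → s * c j (2*h+2) ≤ 0 := by
  have pas := myPascal a c hc
  have tel := myTel c pas
  have half := myHalf a c hc h0 h1 hrec s h hrow
  have hdd2 : s * c (2*h+2) (2*h+2) ≤ 0 := by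
    have haeq := myAeq a c hc h0 h1 hrec (2*h+2) (by omega) ⟨h+1, by omega⟩
    rw [show 2*h+2-1 = 2*h+1 by omega] at haeq
    have hd1 := myDiag a c hc (2*h+1)
    have hd2 := myDiag a c hc (2*h+2)
    have hrel : c (2*h+2) (2*h+2) = c (2*h+1) (2*h+1) / 2 := by
      rw [hd1, hd2, haeq, pow_succ]
      have : (2:ℚ)^(2*h+1) ≠ 0 := by positivity
      field_simp
    have := half (2*h+1) (by omega) (by omega)
    rw [hrel]
    linarith
  have main : ∀ j, h + 1 ≤ j → j ≤ 2*h + 2 → s * c j (2*h+2) ≤ 0 := by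
    intro j hj1 hj2
    have ht := tel (2*h+2-j) j (2*h+2) (2*h+1) (by omega) (by omega)
    rw [ht, mul_add, Finset.mul_sum]
    apply add_nonpos _ hdd2
    apply Finset.sum_nonpos
    intro i hi
    simp only [Finset.mem_Ico] at hi
    exact half i (by omega) (by omega)
  intro j hj
  rcases Nat.lt_or_ge j (h+1) with hjlt | hjge
  · have hsym := mySymm a c hc h0 h1 hrec (2*h+2) j (by omega)
    rw [hsym, Even.neg_one_pow ⟨h+1, by omega⟩, one_mul]
    exact main (2*h+2-j) (by omega) (by omega)
  · exact main j hjge hj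


theorem myMain (A : ℚ) (hA : A ≤ -1)
    (hc : ∀ j d, c j d = ∑ k ∈ Finset.Icc j d,
      ((d - j).choose (d - k) : ℚ) * a k / 2 ^ k)
    (h0 : a 0 = 1) (h1 : a 1 = -1) (h2 : a 2 = A)
    (hrec : ∀ n, 3 ≤ n →
      2 * a n = -((∑ k ∈ Finset.range (n - 1), a k * ((n - 1).choose k : ℚ) * 2 ^ (n - 1 - k)) +
        ∑ k ∈ Finset.range n, a k * (n.choose k : ℚ) * 2 ^ (n - k))) :
    ∀ h, 1 ≤ h → ∀ j, j ≤ 2*h → 0 ≤ (-1:ℚ)^h * c j (2*h) := by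
  intro h h1
  induction h, h1 using Nat.le_induction with
  | base =>
      intro j hj
      have hbase : ∀ j, j ≤ 2 → c j 2 ≤ 0 := by
        intro j hj
        interval_cases j
        · have hI : Finset.Icc 0 2 = {0, 1, 2} := rfl
          rw [hc, hI, Finset.sum_insert (by norm_num), Finset.sum_insert (by norm_num),
            Finset.sum_singleton]
          norm_num [h0, h1, h2]
          linarith
        · have hI : Finset.Icc 1 2 = {1, 2} := rfl
          rw [hc, hI, Finset.sum_insert (by norm_num), Finset.sum_singleton]
          norm_num [h1, h2]
          linarith
        · have hI : Finset.Icc 2 2 = {2} := rfl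
          rw [hc, hI, Finset.sum_singleton]
          norm_num [h2]
          linarith
      have := hbase j hj
      simp only [pow_one]
      linarith
  | succ h hh ih =>
      intro j hj
      have hstep := myStep a c hc h0 h1 hrec ((-1:ℚ)^h) h hh ih j (by omega)
      have he : 2 * (h + 1) = 2*h + 2 := by omega
      rw [he, pow_succ]
      linarith

end

theorem stmt_15 (A : ℚ) (hA : A ≤ -1) (a : ℕ → ℚ)
    (h0 : a 0 = 1) (h1 : a 1 = -1) (h2 : a 2 = A)
    (hrec : ∀ n, 3 ≤ n →
      2 * a n = -((∑ k ∈ Finset.range (n - 1), a k * ((n - 1).choose k : ℚ) * 2 ^ (n - 1 - k)) +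
        ∑ k ∈ Finset.range n, a k * (n.choose k : ℚ) * 2 ^ (n - k)))
    (c : ℕ → ℕ → ℚ)
    (hc : ∀ j d, c j d = ∑ k ∈ Finset.Icc j d,
      ((d - j).choose (d - k) : ℚ) * a k / 2 ^ k) :
    ∀ m, 1 ≤ m →
      (∀ j, j ≤ 4 * m → 0 ≤ c j (4 * m)) ∧
      (∀ j, j ≤ 4 * m + 2 → c j (4 * m + 2) ≤ 0) := by
  have main := myMain a c A hA hc h0 h1 h2 hrec
  intro m hm
  constructor
  · intro j hj
    have h4 : 2 * (2 * m) = 4 * m := by omega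
    have := main (2*m) (by omega) j (by omega)
    rw [h4, Even.neg_one_pow ⟨m, by omega⟩, one_mul] at this
    exact this
  · intro j hj
    have h4 : 2 * (2 * m + 1) = 4 * m + 2 := by omega
    have := main (2*m+1) (by omega) j (by omega)
    rw [h4, Odd.neg_one_pow ⟨m, by omega⟩, neg_one_mul] at this
    linarith
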